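/- Let B₁ ≠ B₂ ∈ ℂ and let P₀ = B₁ + t₀·(B₂ − B₁), P₁ = B₁ + t₁·(B₂ − B₁) with 0 ≤ t₀ < t₁ ≤ 1 (so that B₁, P₀, P₁, B₂ lie on the segment from B₁ to B₂ in this order). If Q₀, Q₁ ∈ ℂ satisfy |Q₀ − B₁| = |P₀ − B₁|, |Q₁ − B₂| = |P₁ − B₂| and |Q₁ − Q₀| = |P₁ − P₀|, then Q₀ = P₀ and Q₁ = P₁. In particular, the only direct isometry g of the plane with |g(P₀) − B₁| = |P₀ − B₁| and |g(P₁) − B₂| = |P₁ − B₂| is the identity. -/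

import Mathlib

/-- Degenerate 1+1 case: if the two measurement points lie, in order, on the segment
joining the two anchors, the trajectory is uniquely determined (`Ind(1)`), and the
only compatible direct isometry is the identity. -/
theorem degenerate_one_plus_one_unique (B1 B2 : ℂ) (hB : B1 ≠ B2)
    (t0 t1 : ℝ) (ht0 : 0 ≤ t0) (ht01 : t0 < t1) (ht1 : t1 ≤ 1)
    (P0 P1 : ℂ) (hP0 : P0 = B1 + (t0 : ℂ) * (B2 - B1)) (hP1 : P1 = B1 + (t1 : ℂ) * (B2 - B1)) :
    (∀ Q0 Q1 : ℂ,
      ‖Q0 - B1‖ = ‖P0 - B1‖ →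
      ‖Q1 - B2‖ = ‖P1 - B2‖ →
      ‖Q1 - Q0‖ = ‖P1 - P0‖ →
      Q0 = P0 ∧ Q1 = P1) ∧
    (∀ g : ℂ → ℂ, (∃ a b : ℂ, ‖a‖ = 1 ∧ g = fun z => a * z + b) →
      ‖g P0 - B1‖ = ‖P0 - B1‖ →
      ‖g P1 - B2‖ = ‖P1 - B2‖ →
      g = id) := by
  set d := ‖B2 - B1‖ with hd_def
  have hBne : B2 - B1 ≠ 0 := sub_ne_zero.mpr (Ne.symm hB)
  have hd : 0 < d := by
    rw [hd_def]; exact norm_pos_iff.mpr hBne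
  have hP0B1 : ‖P0 - B1‖ = t0 * d := by
    rw [hP0, show B1 + (t0:ℂ) * (B2 - B1) - B1 = (t0:ℂ) * (B2 - B1) by ring,
      norm_mul, Complex.norm_real, Real.norm_eq_abs, abs_of_nonneg ht0]
  have hP1B2 : ‖P1 - B2‖ = (1 - t1) * d := by
    rw [hP1, show B1 + (t1:ℂ) * (B2 - B1) - B2 = ((1 - t1 : ℝ) : ℂ) * -(B2 - B1) by
        push_cast; ring, norm_mul, Complex.norm_real, Real.norm_eq_abs, norm_neg,
      abs_of_nonneg (by linarith)]
  have hP1P0 : ‖P1 - P0‖ = (t1 - t0) * d := by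
    rw [hP1, hP0, show B1 + (t1:ℂ) * (B2 - B1) - (B1 + (t0:ℂ) * (B2 - B1))
        = ((t1 - t0 : ℝ) : ℂ) * (B2 - B1) by push_cast; ring,
      norm_mul, Complex.norm_real, Real.norm_eq_abs, abs_of_nonneg (by linarith)]
  have key : ∀ Q0 Q1 : ℂ,
      ‖Q0 - B1‖ = ‖P0 - B1‖ →
      ‖Q1 - B2‖ = ‖P1 - B2‖ →
      ‖Q1 - Q0‖ = ‖P1 - P0‖ →
      Q0 = P0 ∧ Q1 = P1 := by
    intro Q0 Q1 h0 h1 h2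
    rw [hP0B1] at h0
    rw [hP1B2] at h1
    rw [hP1P0] at h2
    -- triangle inequalities
    have tri1 : d ≤ ‖Q0 - B1‖ + ‖B2 - Q0‖ := by
      calc d = ‖(Q0 - B1) + (B2 - Q0)‖ := by rw [hd_def]; ring_nf
        _ ≤ _ := norm_add_le _ _
    have tri2 : ‖B2 - Q0‖ ≤ ‖Q1 - Q0‖ + ‖B2 - Q1‖ := by
      calc ‖B2 - Q0‖ = ‖(Q1 - Q0) + (B2 - Q1)‖ := by ring_nf
        _ ≤ _ := norm_add_le _ _
    have hB2Q1 : ‖B2 - Q1‖ = (1 - t1) * d := by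
      rw [norm_sub_rev]; exact h1
    have he : ‖B2 - Q0‖ = (1 - t0) * d := by
      rw [h0] at tri1; rw [h2, hB2Q1] at tri2; nlinarith
    -- Q0 on segment [B1, B2]
    have hseg0 : Q0 ∈ segment ℝ B1 B2 := by
      rw [mem_segment_iff_wbtw, ← dist_add_dist_eq_iff, Complex.dist_eq, Complex.dist_eq, Complex.dist_eq,
        norm_sub_rev B1 Q0, norm_sub_rev Q0 B2, norm_sub_rev B1 B2]
      rw [h0, he, ← hd_def]; ring
    obtain ⟨a, b, ha, hb, hab, hQ0⟩ := hseg0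
    have hQ0' : Q0 - B1 = (b : ℂ) * (B2 - B1) := by
      rw [← hQ0, Complex.real_smul, Complex.real_smul]
      have : (a : ℂ) = 1 - (b : ℂ) := by
        rw [show a = 1 - b by linarith]; push_cast; ring
      rw [this]; ring
    have hbt0 : b = t0 := by
      rw [hQ0', norm_mul, Complex.norm_real, Real.norm_eq_abs, abs_of_nonneg hb] at h0
      exact mul_right_cancel₀ hd.ne' h0
    have hQ0P0 : Q0 = P0 := by
      rw [hP0, ← hbt0, ← hQ0']; ring
    refine ⟨hQ0P0, ?_⟩
    -- Q1 on segment [Q0, B2]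
    have hseg1 : Q1 ∈ segment ℝ Q0 B2 := by
      rw [mem_segment_iff_wbtw, ← dist_add_dist_eq_iff, Complex.dist_eq, Complex.dist_eq, Complex.dist_eq,
        norm_sub_rev Q0 Q1, norm_sub_rev Q1 B2, norm_sub_rev Q0 B2]
      rw [h2, hB2Q1, he]; ring
    obtain ⟨c, u, hc, hu, hcu, hQ1⟩ := hseg1
    have hQ1' : Q1 - B2 = (c : ℂ) * (Q0 - B2) := by
      rw [← hQ1, Complex.real_smul, Complex.real_smul]
      have : (u : ℂ) = 1 - (c : ℂ) := by
        rw [show u = 1 - c by linarith]; push_cast; ring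
      rw [this]; ring
    have hQ0B2 : Q0 - B2 = ((t0 - 1 : ℝ) : ℂ) * (B2 - B1) := by
      rw [hQ0P0, hP0]; push_cast; ring
    have hc' : c * (1 - t0) = 1 - t1 := by
      rw [hQ1', hQ0B2, norm_mul, norm_mul, Complex.norm_real, Complex.norm_real, Real.norm_eq_abs, Real.norm_eq_abs,
        abs_of_nonneg hc, abs_of_nonpos (by linarith : t0 - 1 ≤ 0), ← hd_def] at h1
      have h1' : (c * (1 - t0)) * d = (1 - t1) * d := by linarith [h1]
      exact mul_right_cancel₀ hd.ne' h1'
    have : Q1 - B2 = P1 - B2 := by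
      rw [hQ1', hQ0B2, hP1]
      rw [show B1 + (t1:ℂ) * (B2 - B1) - B2 = ((t1 - 1 : ℝ) : ℂ) * (B2 - B1) by push_cast; ring]
      rw [show (c:ℂ) * (((t0 - 1 : ℝ):ℂ) * (B2 - B1)) = ((c * (t0 - 1) : ℝ):ℂ) * (B2 - B1) by
        push_cast; ring]
      congr 2
      have h : c * (t0 - 1) = t1 - 1 := by linarith [hc']
      exact_mod_cast h
    exact sub_left_inj.mp this
  refine ⟨key, ?_⟩
  intro g hg hg0 hg1
  obtain ⟨a, b, ha, hgab⟩ := hg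
  have h2 : ‖g P1 - g P0‖ = ‖P1 - P0‖ := by
    rw [hgab]
    simp only
    rw [show a * P1 + b - (a * P0 + b) = a * (P1 - P0) by ring, norm_mul, ha, one_mul]
  obtain ⟨e0, e1⟩ := key (g P0) (g P1) hg0 hg1 h2
  have hPne : P1 - P0 ≠ 0 := by
    rw [hP1, hP0, show B1 + (t1:ℂ) * (B2 - B1) - (B1 + (t0:ℂ) * (B2 - B1))
        = ((t1 - t0 : ℝ):ℂ) * (B2 - B1) by push_cast; ring]
    exact mul_ne_zero (by exact_mod_cast sub_ne_zero.mpr (ne_of_gt ht01)) hBne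
  have ea : a = 1 := by
    have h0' : a * P0 + b = P0 := by rw [hgab] at e0; exact e0
    have h1' : a * P1 + b = P1 := by rw [hgab] at e1; exact e1
    have : a * (P1 - P0) = 1 * (P1 - P0) := by ring_nf; linear_combination h1' - h0'
    exact mul_right_cancel₀ hPne this
  have eb : b = 0 := by
    have h0' : a * P0 + b = P0 := by rw [hgab] at e0; exact e0
    rw [ea, one_mul] at h0'
    linear_combination h0'
  funext z
  rw [hgab]; simp [ea, eb]
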